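/- arXiv:2411.05765 — 2 statements merged into one kernel-verified Lean document; each statement's English description precedes it below -/
import Mathlib

section
/- If the evolution family Φ has a uniform h-dichotomy on [e∗, +∞) with constants K ≥ 1 and α > 0, then Φ is h-expansive on [e∗, +∞) with constants L = K and β = α; that is, every solution satisfies |x(t)| ≤ K·[h(t∗a^{∗-1})^{-α}·|x(a)| + h(b∗t^{∗-1})^{-α}·|x(b)|] whenever [a,b] ⊆ [e∗, +∞) and a ≤ t ≤ b. -/
open Set

noncomputable section

/-- The operation `t ∗ s := h⁻¹ (h t · h s)` on `J`. -/
def star (h hinv : ℝ → ℝ) (t s : ℝ) : ℝ := hinv (h t * h s)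

/-- The unit element `e∗ := h⁻¹ 1`. -/
def estar (hinv : ℝ → ℝ) : ℝ := hinv 1

/-- The inverse `t^{∗-1} := h⁻¹ (1 / h t)`. -/
def sinv (h hinv : ℝ → ℝ) (t : ℝ) : ℝ := hinv (1 / h t)

/-- The absolute value `|t|∗ := t` if `e∗ ≤ t` and `t^{∗-1}` otherwise. -/
def absStar (h hinv : ℝ → ℝ) (t : ℝ) : ℝ := if estar hinv ≤ t then t else sinv h hinv t

/-- `h : J → (0,∞)` is a growth rate: a strictly increasing homeomorphism of
`J = (a₀,∞)` (or `J = ℝ`) onto `(0,∞)`, with (two-sided) inverse `hinv`. -/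
structure GrowthRate (J : Set ℝ) (h hinv : ℝ → ℝ) : Prop where
  J_eq : (∃ a₀ : ℝ, J = Set.Ioi a₀) ∨ J = Set.univ
  mono : StrictMonoOn h J
  cont : ContinuousOn h J
  pos : ∀ t ∈ J, 0 < h t
  inv_left : ∀ t ∈ J, hinv (h t) = t
  inv_mem : ∀ y ∈ Set.Ioi (0:ℝ), hinv y ∈ J
  inv_right : ∀ y ∈ Set.Ioi (0:ℝ), h (hinv y) = y
  inv_cont : ContinuousOn hinv (Set.Ioi 0)

variable {E : Type*} [NormedAddCommGroup E] [NormedSpace ℝ E]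

/-- An evolution family on `J`: `Φ t t = I` and `Φ t u ∘ Φ u s = Φ t s`. -/
def IsEvolutionFamily (J : Set ℝ) (Φ : ℝ → ℝ → (E →L[ℝ] E)) : Prop :=
  (∀ t ∈ J, Φ t t = 1) ∧ (∀ t ∈ J, ∀ u ∈ J, ∀ s ∈ J, Φ t u * Φ u s = Φ t s)

/-- `Φ` has a uniform `h`-dichotomy on `I` with projections `P` and constants `K, α`. -/
def HasUHDWith (I : Set ℝ) (h : ℝ → ℝ) (Φ : ℝ → ℝ → (E →L[ℝ] E))
    (P : ℝ → (E →L[ℝ] E)) (K α : ℝ) : Prop :=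
  (∀ t ∈ I, P t * P t = P t) ∧
  (∀ t ∈ I, ∀ s ∈ I, P t * Φ t s = Φ t s * P s) ∧
  (∀ s ∈ I, ∀ t ∈ I, s ≤ t → ‖Φ t s * P s‖ ≤ K * (h t / h s) ^ (-α)) ∧
  (∀ s ∈ I, ∀ t ∈ I, t ≤ s → ‖Φ t s * (1 - P s)‖ ≤ K * (h s / h t) ^ (-α))

/-- `Φ` has a uniform `h`-dichotomy on `I`. -/
def HasUHD (I : Set ℝ) (h : ℝ → ℝ) (Φ : ℝ → ℝ → (E →L[ℝ] E)) : Prop :=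
  ∃ K ≥ (1:ℝ), ∃ α > (0:ℝ), ∃ P : ℝ → (E →L[ℝ] E), HasUHDWith I h Φ P K α

/-- Uniform bounded `h`-growth on `I`: every solution satisfies
`|x t| ≤ C |x s|` for `s ∈ I` and `t ∈ [s, s∗T] ∩ I`. -/
def UnifBoundedHGrowth (J I : Set ℝ) (h hinv : ℝ → ℝ) (Φ : ℝ → ℝ → (E →L[ℝ] E)) : Prop :=
  ∃ T > estar hinv, ∃ C ≥ (1:ℝ), ∀ s₀ ∈ J, ∀ ξ : E, ∀ s ∈ I, ∀ t ∈ I,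
    s ≤ t → t ≤ star h hinv s T → ‖(Φ t s₀) ξ‖ ≤ C * ‖(Φ s s₀) ξ‖

/-- Uniform bounded `h`-decay on `I`: every solution satisfies
`|x t| ≤ C |x s|` for `s ∈ I` and `t ∈ [s∗T^{∗-1}, s] ∩ I`. -/
def UnifBoundedHDecay (J I : Set ℝ) (h hinv : ℝ → ℝ) (Φ : ℝ → ℝ → (E →L[ℝ] E)) : Prop :=
  ∃ T > estar hinv, ∃ C ≥ (1:ℝ), ∀ s₀ ∈ J, ∀ ξ : E, ∀ s ∈ I, ∀ t ∈ I,
    star h hinv s (sinv h hinv T) ≤ t → t ≤ s → ‖(Φ t s₀) ξ‖ ≤ C * ‖(Φ s s₀) ξ‖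

/-- Uniform bounded `h`-growth and `h`-decay on `I`: every solution satisfies
`|x t| ≤ C |x s|` for `s ∈ I` and `t ∈ [s∗T^{∗-1}, s∗T] ∩ I`. -/
def UnifBoundedHGrowthDecay (J I : Set ℝ) (h hinv : ℝ → ℝ) (Φ : ℝ → ℝ → (E →L[ℝ] E)) : Prop :=
  ∃ T > estar hinv, ∃ C ≥ (1:ℝ), ∀ s₀ ∈ J, ∀ ξ : E, ∀ s ∈ I, ∀ t ∈ I,
    star h hinv s (sinv h hinv T) ≤ t → t ≤ star h hinv s T → ‖(Φ t s₀) ξ‖ ≤ C * ‖(Φ s s₀) ξ‖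

/-- `Φ` is uniformly `h`-noncritical on `[e∗,∞)`: there are `T > e∗` and `θ ∈ (0,1)` with
`|x t| ≤ θ · sup {|x u| : u ∈ J, |u ∗ t^{∗-1}|∗ ≤ T}` for all `t ≥ T`, for every solution. -/
def UnifHNoncritical (J : Set ℝ) (h hinv : ℝ → ℝ) (Φ : ℝ → ℝ → (E →L[ℝ] E)) : Prop :=
  ∃ T > estar hinv, ∃ θ : ℝ, 0 < θ ∧ θ < 1 ∧
    ∀ s₀ ∈ J, ∀ ξ : E, ∀ t, T ≤ t →
      ‖(Φ t s₀) ξ‖ ≤ θ * sSup ((fun u => ‖(Φ u s₀) ξ‖) ''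
        {u | u ∈ J ∧ absStar h hinv (star h hinv u (sinv h hinv t)) ≤ T})

/-- `Φ` is `h`-expansive on `I`: there are `L, β > 0` such that every solution satisfies
`|x t| ≤ L (h(t∗a^{∗-1})^{-β} |x a| + h(b∗t^{∗-1})^{-β} |x b|)` for `[a,b] ⊆ I`, `a ≤ t ≤ b`. -/
def HExpansive (J I : Set ℝ) (h hinv : ℝ → ℝ) (Φ : ℝ → ℝ → (E →L[ℝ] E)) : Prop :=
  ∃ L > (0:ℝ), ∃ β > (0:ℝ), ∀ s₀ ∈ J, ∀ ξ : E, ∀ a ∈ I, ∀ b ∈ I, ∀ t, a ≤ t → t ≤ b →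
    ‖(Φ t s₀) ξ‖ ≤ L * ((h (star h hinv t (sinv h hinv a))) ^ (-β) * ‖(Φ a s₀) ξ‖ +
      (h (star h hinv b (sinv h hinv t))) ^ (-β) * ‖(Φ b s₀) ξ‖)

/-- a uniform `h`-dichotomy on `[e∗,∞)` with constants `K, α` implies
`h`-expansiveness on `[e∗,∞)` with `L = K` and `β = α`. -/
theorem statement14 {J : Set ℝ} {h hinv : ℝ → ℝ} (hgr : GrowthRate J h hinv)
    {E : Type*} [NormedAddCommGroup E] [NormedSpace ℝ E] [FiniteDimensional ℝ E]
    (Φ : ℝ → ℝ → (E →L[ℝ] E)) (hΦ : IsEvolutionFamily J Φ)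
    (K α : ℝ) (hK : 1 ≤ K) (hα : 0 < α)
    (P : ℝ → (E →L[ℝ] E)) (hUHD : HasUHDWith (Set.Ici (estar hinv)) h Φ P K α) :
    ∀ s₀ ∈ J, ∀ ξ : E, ∀ a ∈ Set.Ici (estar hinv), ∀ b ∈ Set.Ici (estar hinv),
      ∀ t, a ≤ t → t ≤ b →
      ‖(Φ t s₀) ξ‖ ≤ K * ((h (star h hinv t (sinv h hinv a))) ^ (-α) * ‖(Φ a s₀) ξ‖ +
        (h (star h hinv b (sinv h hinv t))) ^ (-α) * ‖(Φ b s₀) ξ‖) := by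

  intro s₀ hs₀ ξ a ha b hb t hat htb
  -- e∗ ∈ J and Ici e∗ ⊆ J
  have heJ : estar hinv ∈ J := hgr.inv_mem 1 (Set.mem_Ioi.mpr one_pos)
  have hIJ : Set.Ici (estar hinv) ⊆ J := by
    rcases hgr.J_eq with ⟨a₀, rfl⟩ | rfl
    · intro x hx; exact Set.mem_Ioi.mpr (lt_of_lt_of_le (Set.mem_Ioi.mp heJ) (Set.mem_Ici.mp hx))
    · intro x _; trivial
  have haI : a ∈ Set.Ici (estar hinv) := ha
  have htI : t ∈ Set.Ici (estar hinv) := le_trans ha hat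
  have hbI : b ∈ Set.Ici (estar hinv) := hb
  have haJ : a ∈ J := hIJ ha
  have htJ : t ∈ J := hIJ htI
  have hbJ : b ∈ J := hIJ hb
  obtain ⟨_, hcomm, hbd1, hbd2⟩ := hUHD
  -- key identity: h (star t (sinv s)) = h t / h s
  have key : ∀ u ∈ J, ∀ s ∈ J, h (star h hinv u (sinv h hinv s)) = h u / h s := by
    intro u hu s hs
    have hs0 : (0:ℝ) < h s := hgr.pos s hs
    have hu0 : (0:ℝ) < h u := hgr.pos u hu
    have h1 : h (sinv h hinv s) = 1 / h s := hgr.inv_right _ (Set.mem_Ioi.mpr (by positivity))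
    have : h u * h (sinv h hinv s) = h u / h s := by rw [h1]; ring
    rw [show star h hinv u (sinv h hinv s) = hinv (h u * h (sinv h hinv s)) from rfl, this, hgr.inv_right _ (Set.mem_Ioi.mpr (by positivity))]
  -- decomposition
  have hdec : (Φ t s₀) ξ = (Φ t a * P a) ((Φ a s₀) ξ) + (Φ t b * (1 - P b)) ((Φ b s₀) ξ) := by
    have e1 : Φ t a * P a * Φ a s₀ = P t * Φ t s₀ := by
      have c1 : P t * Φ t a = Φ t a * P a := hcomm t htI a haI
      rw [← c1, mul_assoc, hΦ.2 t htJ a haJ s₀ hs₀]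
    have e2 : Φ t b * (1 - P b) * Φ b s₀ = (1 - P t) * Φ t s₀ := by
      have c2 : P t * Φ t b = Φ t b * P b := hcomm t htI b hbI
      have : Φ t b * (1 - P b) = (1 - P t) * Φ t b := by
        simp only [mul_sub, sub_mul, mul_one, one_mul, c2]
      rw [this, mul_assoc, hΦ.2 t htJ b hbJ s₀ hs₀]
    have := congrArg (fun f : E →L[ℝ] E => f ξ) (congrArg₂ (· + ·) e1 e2)
    simp only [ContinuousLinearMap.add_apply, ContinuousLinearMap.mul_apply] at this ⊢
    rw [this]
    have : P t ((Φ t s₀) ξ) + (1 - P t) ((Φ t s₀) ξ)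
        = ((P t + (1 - P t)) : E →L[ℝ] E) ((Φ t s₀) ξ) := by
      simp [ContinuousLinearMap.add_apply]
    rw [this]
    simp
  -- norm estimate
  have hb1 : ‖Φ t a * P a‖ ≤ K * (h t / h a) ^ (-α) := hbd1 a haI t htI hat
  have hb2 : ‖Φ t b * (1 - P b)‖ ≤ K * (h b / h t) ^ (-α) := hbd2 b hbI t htI htb
  calc ‖(Φ t s₀) ξ‖ ≤ ‖(Φ t a * P a) ((Φ a s₀) ξ)‖ + ‖(Φ t b * (1 - P b)) ((Φ b s₀) ξ)‖ := by
        rw [hdec]; exact norm_add_le _ _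
    _ ≤ ‖Φ t a * P a‖ * ‖(Φ a s₀) ξ‖ + ‖Φ t b * (1 - P b)‖ * ‖(Φ b s₀) ξ‖ := by
        gcongr <;> exact ContinuousLinearMap.le_opNorm _ _
    _ ≤ (K * (h t / h a) ^ (-α)) * ‖(Φ a s₀) ξ‖ + (K * (h b / h t) ^ (-α)) * ‖(Φ b s₀) ξ‖ := by
        exact add_le_add (mul_le_mul_of_nonneg_right hb1 (norm_nonneg _)) (mul_le_mul_of_nonneg_right hb2 (norm_nonneg _))
    _ = K * ((h (star h hinv t (sinv h hinv a))) ^ (-α) * ‖(Φ a s₀) ξ‖ +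
        (h (star h hinv b (sinv h hinv t))) ^ (-α) * ‖(Φ b s₀) ξ‖) := by
        rw [key t htJ a haJ, key b hbJ t htJ]; ring
end
end

section
/- If the evolution family Φ is h-expansive on [e∗, +∞), then Φ is uniformly h-noncritical on [e∗, +∞): there exist T > e∗ and θ ∈ (0,1) such that every solution satisfies |x(t)| ≤ θ·sup{|x(u)| : u ∈ J, |u∗t^{∗-1}|∗ ≤ T} for all t ≥ T (one may take any T with 2L·h(T)^{-β} < 1 and θ = 2L·h(T)^{-β}). -/
open Set

noncomputable section

variable {E : Type*} [NormedAddCommGroup E] [NormedSpace ℝ E]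

/-- `h`-expansiveness on `[e∗,∞)` implies uniform `h`-noncriticality
on `[e∗,∞)`. -/
theorem statement15 {J : Set ℝ} {h hinv : ℝ → ℝ} (hgr : GrowthRate J h hinv)
    {E : Type*} [NormedAddCommGroup E] [NormedSpace ℝ E] [FiniteDimensional ℝ E]
    (Φ : ℝ → ℝ → (E →L[ℝ] E)) (hΦ : IsEvolutionFamily J Φ)
    (hexp : HExpansive J (Set.Ici (estar hinv)) h hinv Φ) :
    UnifHNoncritical J h hinv Φ := by
  obtain ⟨L, hL, β, hβ, hbound⟩ := hexp
  have hmono := hgr.mono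
  have heJ : estar hinv ∈ J := hgr.inv_mem 1 (Set.mem_Ioi.mpr one_pos)
  have hhe : h (estar hinv) = 1 := hgr.inv_right 1 (Set.mem_Ioi.mpr one_pos)
  have hJup : ∀ s ∈ J, ∀ t : ℝ, s ≤ t → t ∈ J := by
    intro s hs t hst
    rcases hgr.J_eq with ⟨a₀, rfl⟩ | rfl
    · exact Set.mem_Ioi.mpr (lt_of_lt_of_le (Set.mem_Ioi.mp hs) hst)
    · trivial
  have hle : ∀ u ∈ J, ∀ v ∈ J, (h u ≤ h v ↔ u ≤ v) := fun u hu v hv =>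
    hmono.le_iff_le hu hv
  have hlt : ∀ u ∈ J, ∀ v ∈ J, (h u < h v ↔ u < v) := fun u hu v hv =>
    hmono.lt_iff_lt hu hv
  -- the key computation for star/sinv
  have key : ∀ u ∈ J, ∀ w ∈ J, star h hinv u (sinv h hinv w) = hinv (h u / h w) := by
    intro u hu w hw
    have hwp := hgr.pos w hw
    show hinv (h u * h (hinv (1 / h w))) = hinv (h u / h w)
    rw [hgr.inv_right _ (Set.mem_Ioi.mpr (by positivity : (0:ℝ) < 1 / h w)), mul_one_div]
  set y : ℝ := (2 * L + 1) ^ (1 / β : ℝ) with hy_def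
  have h2L : (1:ℝ) < 2 * L + 1 := by linarith
  have hy1 : 1 < y := by
    rw [hy_def]
    exact (Real.one_lt_rpow_iff_of_pos (by linarith)).mpr (Or.inl ⟨h2L, by positivity⟩)
  have hy0 : (0:ℝ) < y := lt_trans one_pos hy1
  have hyβ : y ^ (-β) = (2 * L + 1)⁻¹ := by
    rw [hy_def, ← Real.rpow_mul (by linarith : (0:ℝ) ≤ 2 * L + 1)]
    rw [show 1 / β * (-β) = (-1 : ℝ) by field_simp]
    exact Real.rpow_neg_one _
  set T : ℝ := hinv y with hT_def
  have hTJ : T ∈ J := hgr.inv_mem y (Set.mem_Ioi.mpr hy0)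
  have hhT : h T = y := hgr.inv_right y (Set.mem_Ioi.mpr hy0)
  have heT : estar hinv < T := (hlt _ heJ _ hTJ).mp (by rw [hhe, hhT]; exact hy1)
  refine ⟨T, heT, 2 * L / (2 * L + 1), by positivity, ?_, ?_⟩
  · rw [div_lt_one (by linarith)]; linarith
  intro s₀ hs₀ ξ t hTt
  set f : ℝ → ℝ := fun u => ‖(Φ u s₀) ξ‖ with hf_def
  have htJ : t ∈ J := hJup T hTJ t hTt
  have htpos : 0 < h t := hgr.pos t htJ
  have hhTt : y ≤ h t := by rw [← hhT]; exact (hle _ hTJ _ htJ).mpr hTt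
  have h1t : 1 ≤ h t := le_trans hy1.le hhTt
  set a : ℝ := hinv (h t / y) with ha_def
  set b : ℝ := hinv (h t * y) with hb_def
  have haJ : a ∈ J := hgr.inv_mem _ (Set.mem_Ioi.mpr (by positivity))
  have hbJ : b ∈ J := hgr.inv_mem _ (Set.mem_Ioi.mpr (by positivity))
  have hha : h a = h t / y := hgr.inv_right _ (Set.mem_Ioi.mpr (by positivity))
  have hhb : h b = h t * y := hgr.inv_right _ (Set.mem_Ioi.mpr (by positivity))
  have hapos : 0 < h a := by rw [hha]; positivity
  have hbpos : 0 < h b := by rw [hhb]; positivity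
  have hea : estar hinv ≤ a := by
    rw [← hle _ heJ _ haJ, hhe, hha]
    rw [le_div_iff₀ hy0, one_mul]; exact hhTt
  have hat : a ≤ t := by
    rw [← hle _ haJ _ htJ, hha]
    exact div_le_self htpos.le hy1.le
  have htb : t ≤ b := by
    rw [← hle _ htJ _ hbJ, hhb]
    exact le_mul_of_one_le_right htpos.le hy1.le
  have heb : estar hinv ≤ b := le_trans hea (le_trans hat htb)
  set S : Set ℝ := {u | u ∈ J ∧ absStar h hinv (star h hinv u (sinv h hinv t)) ≤ T} with hS_def
  -- every element of S lies in [a, b]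
  have hSab : ∀ u ∈ S, a ≤ u ∧ u ≤ b := by
    rintro u ⟨huJ, habs⟩
    have hup : 0 < h u := hgr.pos u huJ
    have hkey := key u huJ t htJ
    have hvJ : hinv (h u / h t) ∈ J := hgr.inv_mem _ (Set.mem_Ioi.mpr (by positivity))
    have hhv : h (hinv (h u / h t)) = h u / h t :=
      hgr.inv_right _ (Set.mem_Ioi.mpr (by positivity))
    rw [hkey] at habs
    unfold absStar at habs
    by_cases hc : estar hinv ≤ hinv (h u / h t)
    · rw [if_pos hc] at habs
      have h1 : (1:ℝ) ≤ h u / h t := by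
        have := (hle _ heJ _ hvJ).mpr hc; rwa [hhe, hhv] at this
      have h2 : h u / h t ≤ y := by
        have := (hle _ hvJ _ hTJ).mpr habs; rwa [hhv, hhT] at this
      constructor
      · rw [← hle _ haJ _ huJ, hha]
        rw [one_le_div htpos] at h1
        calc h t / y ≤ h t := div_le_self htpos.le hy1.le
          _ ≤ h u := h1
      · rw [← hle _ huJ _ hbJ, hhb]
        rw [div_le_iff₀ htpos] at h2
        calc h u ≤ y * h t := h2
          _ = h t * y := by ring
    · rw [if_neg hc] at habs
      push_neg at hc
      have h1 : h u / h t < 1 := by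
        have := (hlt _ hvJ _ heJ).mpr hc; rwa [hhe, hhv] at this
      have hsv : sinv h hinv (hinv (h u / h t)) = hinv (h t / h u) := by
        unfold sinv
        rw [hhv, one_div_div]
      rw [hsv] at habs
      have hwJ : hinv (h t / h u) ∈ J := hgr.inv_mem _ (Set.mem_Ioi.mpr (by positivity))
      have hhw : h (hinv (h t / h u)) = h t / h u :=
        hgr.inv_right _ (Set.mem_Ioi.mpr (by positivity))
      have h2 : h t / h u ≤ y := by
        have := (hle _ hwJ _ hTJ).mpr habs; rwa [hhw, hhT] at this
      constructor
      · rw [← hle _ haJ _ huJ, hha]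
        rw [div_le_iff₀ hup] at h2
        rw [div_le_iff₀ hy0]
        calc h t ≤ y * h u := h2
          _ = h u * y := by ring
      · rw [← hle _ huJ _ hbJ, hhb]
        rw [div_lt_one htpos] at h1
        nlinarith
  -- a and b belong to S
  have haS : a ∈ S := by
    refine ⟨haJ, ?_⟩
    rw [key a haJ t htJ]
    have harg : h a / h t = y⁻¹ := by
      rw [hha]; field_simp; try ring
    rw [harg]
    have hvJ : hinv y⁻¹ ∈ J := hgr.inv_mem _ (Set.mem_Ioi.mpr (by positivity))
    have hhv : h (hinv y⁻¹) = y⁻¹ := hgr.inv_right _ (Set.mem_Ioi.mpr (by positivity))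
    have hlt1 : hinv y⁻¹ < estar hinv := by
      rw [← hlt _ hvJ _ heJ, hhe, hhv]
      exact inv_lt_one_of_one_lt₀ hy1
    unfold absStar
    rw [if_neg (not_le.mpr hlt1)]
    unfold sinv
    rw [hhv, one_div, inv_inv]
  have hbS : b ∈ S := by
    refine ⟨hbJ, ?_⟩
    rw [key b hbJ t htJ]
    have harg : h b / h t = y := by
      rw [hhb]; field_simp; try ring
    rw [harg]
    unfold absStar
    rw [if_pos heT.le]
  -- the image is bounded above
  have hbdd : ∀ z ∈ f '' S, z ≤ L * (f a + f b) := by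
    rintro z ⟨u, huS, rfl⟩
    obtain ⟨hau, hub⟩ := hSab u huS
    have huJ := huS.1
    have hup : 0 < h u := hgr.pos u huJ
    have := hbound s₀ hs₀ ξ a (Set.mem_Ici.mpr hea) b (Set.mem_Ici.mpr heb) u hau hub
    have h1 : h (star h hinv u (sinv h hinv a)) ^ (-β) ≤ 1 := by
      apply Real.rpow_le_one_of_one_le_of_nonpos _ (by linarith)
      rw [key u huJ a haJ]
      rw [hgr.inv_right _ (Set.mem_Ioi.mpr (by positivity : (0:ℝ) < h u / h a))]
      rw [one_le_div hapos]
      exact (hle _ haJ _ huJ).mpr hau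
    have hbpos : 0 < h b := by rw [hhb]; positivity
    have h2 : h (star h hinv b (sinv h hinv u)) ^ (-β) ≤ 1 := by
      apply Real.rpow_le_one_of_one_le_of_nonpos _ (by linarith)
      rw [key b hbJ u huJ]
      rw [hgr.inv_right _ (Set.mem_Ioi.mpr (by positivity : (0:ℝ) < h b / h u))]
      rw [one_le_div hup]
      exact (hle _ huJ _ hbJ).mpr hub
    have hfa : (0:ℝ) ≤ f a := norm_nonneg _
    have hfb : (0:ℝ) ≤ f b := norm_nonneg _
    have hp1 : (0:ℝ) ≤ h (star h hinv u (sinv h hinv a)) ^ (-β) :=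
      Real.rpow_nonneg (by
        rw [key u huJ a haJ]
        rw [hgr.inv_right _ (Set.mem_Ioi.mpr (by positivity : (0:ℝ) < h u / h a))]
        positivity) _
    have hp2 : (0:ℝ) ≤ h (star h hinv b (sinv h hinv u)) ^ (-β) :=
      Real.rpow_nonneg (by
        have hbpos : 0 < h b := by rw [hhb]; positivity
        rw [key b hbJ u huJ]
        rw [hgr.inv_right _ (Set.mem_Ioi.mpr (by positivity : (0:ℝ) < h b / h u))]
        positivity) _
    calc f u ≤ L * (h (star h hinv u (sinv h hinv a)) ^ (-β) * f a +
        h (star h hinv b (sinv h hinv u)) ^ (-β) * f b) := this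
      _ ≤ L * (1 * f a + 1 * f b) := by
          apply mul_le_mul_of_nonneg_left _ hL.le
          gcongr
      _ = L * (f a + f b) := by ring
  have hBdd : BddAbove (f '' S) := ⟨L * (f a + f b), fun z hz => hbdd z hz⟩
  have hfaM : f a ≤ sSup (f '' S) := le_csSup hBdd ⟨a, haS, rfl⟩
  have hfbM : f b ≤ sSup (f '' S) := le_csSup hBdd ⟨b, hbS, rfl⟩
  have hM0 : (0:ℝ) ≤ sSup (f '' S) := le_trans (norm_nonneg _) hfaM
  -- apply expansiveness at t
  have hmain := hbound s₀ hs₀ ξ a (Set.mem_Ici.mpr hea) b (Set.mem_Ici.mpr heb) t hat htb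
  have he1 : h (star h hinv t (sinv h hinv a)) = y := by
    rw [key t htJ a haJ]
    rw [hgr.inv_right _ (Set.mem_Ioi.mpr (by positivity : (0:ℝ) < h t / h a))]
    rw [hha]; field_simp; try ring
  have he2 : h (star h hinv b (sinv h hinv t)) = y := by
    rw [key b hbJ t htJ]
    rw [hgr.inv_right _ (Set.mem_Ioi.mpr (by positivity : (0:ℝ) < h b / h t))]
    rw [hhb]; field_simp; try ring
  rw [he1, he2, hyβ] at hmain
  have hinvpos : (0:ℝ) < (2 * L + 1)⁻¹ := by positivity
  calc ‖(Φ t s₀) ξ‖ ≤ L * ((2*L+1)⁻¹ * f a + (2*L+1)⁻¹ * f b) := hmain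
    _ ≤ L * ((2*L+1)⁻¹ * sSup (f '' S) + (2*L+1)⁻¹ * sSup (f '' S)) := by
        apply mul_le_mul_of_nonneg_left _ hL.le
        gcongr
    _ = 2 * L / (2 * L + 1) * sSup (f '' S) := by
        rw [div_eq_mul_inv]; ring
end
end
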